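/- Let k ≥ 1 and let A₁, …, A_k, Ã₁, …, Ã_k ∈ ℝ^{m×n} be entrywise nonnegative with Ãᵢ ⊵_ε Aᵢ for every i ∈ {1,…,k}. Then ∑_{i=1}^k Ãᵢ ⊵_ε ∑_{i=1}^k Aᵢ. -/

import Mathlib

open Matrix ComplexOrder

/-- Row-sum degree matrix of `A`. -/
def rowDeg {α β : Type*} [Fintype α] [Fintype β] [DecidableEq α]
    (A : Matrix α β ℝ) : Matrix α α ℝ :=
  Matrix.diagonal fun i => ∑ j, A i j

/-- Column-sum degree matrix of `A`. -/
def colDeg {α β : Type*} [Fintype α] [Fintype β] [DecidableEq β]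
    (A : Matrix α β ℝ) : Matrix β β ℝ :=
  Matrix.diagonal fun j => ∑ i, A i j

/-- The error matrix `E := D_row − A · D_col⁻ · Aᵀ` (with `0⁻¹ = 0`). -/
noncomputable def errE {α β : Type*} [Fintype α] [Fintype β] [DecidableEq α] [DecidableEq β]
    (A : Matrix α β ℝ) : Matrix α α ℝ :=
  rowDeg A - A * Matrix.diagonal (fun j => (∑ i, A i j)⁻¹) * Aᵀ

/-- The error matrix `F := D_col − Aᵀ · D_row⁻ · A` (with `0⁻¹ = 0`). -/
noncomputable def errF {α β : Type*} [Fintype α] [Fintype β] [DecidableEq α] [DecidableEq β]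
    (A : Matrix α β ℝ) : Matrix β β ℝ :=
  colDeg A - Aᵀ * Matrix.diagonal (fun i => (∑ j, A i j)⁻¹) * A

/-- `Ã ⊵_ε A`: `Ã` is an `ε`-SV approximation of the entrywise-nonnegative matrix `A`,
with degree matrices given by the row and column sums of `A` (real matrices viewed as
complex for the bilinear-form inequality). -/
noncomputable def IsSVgApprox {α β : Type*} [Fintype α] [Fintype β] [DecidableEq α]
    [DecidableEq β] (ε : ℝ) (A Atil : Matrix α β ℝ) : Prop :=
  (errE A).PosSemidef ∧ (errF A).PosSemidef ∧
  ∀ (x : α → ℂ) (y : β → ℂ),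
    ‖star x ⬝ᵥ ((Atil - A).map fun a => (a : ℂ)).mulVec y‖ ≤
      ε / 4 * ((star x ⬝ᵥ ((errE A).map fun a => (a : ℂ)).mulVec x).re +
        (star y ⬝ᵥ ((errF A).map fun a => (a : ℂ)).mulVec y).re)

section Aux

set_option linter.unusedSectionVars false

variable {α β : Type*} [Fintype α] [Fintype β] [DecidableEq α] [DecidableEq β]

lemma SV_errF_eq (A : Matrix α β ℝ) : errF A = errE Aᵀ := by
  rw [errE, errF, Matrix.transpose_transpose]; rfl

lemma SV_errE_symm (A : Matrix α β ℝ) : (errE A)ᵀ = errE A := by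
  unfold errE rowDeg
  rw [Matrix.transpose_sub, Matrix.diagonal_transpose, Matrix.transpose_mul,
    Matrix.transpose_mul, Matrix.transpose_transpose, Matrix.diagonal_transpose]
  rw [Matrix.mul_assoc]

lemma SV_errE_herm (A : Matrix α β ℝ) : (errE A).IsHermitian := by
  unfold Matrix.IsHermitian
  rw [Matrix.conjTranspose]
  exact (Matrix.conjTranspose_eq_transpose_of_trivial _).trans (SV_errE_symm A)

/-- Per-column contribution to the quadratic form of `errE`. -/
noncomputable def colQ (A : Matrix α β ℝ) (x : α → ℂ) (j : β) : ℝ :=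
  (∑ i, A i j * Complex.normSq (x i)) -
    (∑ i, A i j)⁻¹ * Complex.normSq (∑ i, (A i j : ℂ) * x i)

lemma SV_sum3 {f : α → α → β → ℂ} :
    ∑ x1, ∑ x2, ∑ j, f x1 x2 j = ∑ j, ∑ x2, ∑ x1, f x1 x2 j := by
  calc ∑ x1, ∑ x2, ∑ j, f x1 x2 j
      = ∑ x2, ∑ x1, ∑ j, f x1 x2 j := Finset.sum_comm
    _ = ∑ x2, ∑ j, ∑ x1, f x1 x2 j := Finset.sum_congr rfl fun x2 _ => Finset.sum_comm
    _ = ∑ j, ∑ x2, ∑ x1, f x1 x2 j := Finset.sum_comm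

lemma SV_quadE (A : Matrix α β ℝ) (x : α → ℂ) :
    star x ⬝ᵥ ((errE A).map (fun a => (a : ℂ))).mulVec x = ((∑ j, colQ A x j : ℝ) : ℂ) := by
  have hns : ∀ j, ((Complex.normSq (∑ i, (A i j : ℂ) * x i) : ℝ) : ℂ)
      = (∑ i, (A i j : ℂ) * star (x i)) * (∑ i, (A i j : ℂ) * x i) := by
    intro j
    rw [← Complex.mul_conj]
    rw [mul_comm]
    congr 1
    simp [map_sum, Complex.conj_ofReal, mul_comm]
  have hnx : ∀ i, ((Complex.normSq (x i) : ℝ) : ℂ) = star (x i) * x i := by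
    intro i
    rw [← Complex.mul_conj, mul_comm]; rfl
  simp only [colQ]
  push_cast
  simp only [hns, hnx]
  simp only [dotProduct, Matrix.mulVec, errE, rowDeg, Matrix.sub_apply, Matrix.map_apply,
    Matrix.mul_apply, Matrix.transpose_apply, Matrix.diagonal_apply, Pi.star_apply,
    apply_ite, Complex.ofReal_zero, mul_ite, ite_mul, mul_zero, zero_mul,
    Finset.sum_ite_eq', Finset.sum_ite_eq, Finset.mem_univ, if_true, push_cast,
    sub_mul, mul_sub, Finset.sum_sub_distrib, Finset.mul_sum, Finset.sum_mul]
  congr 1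
  · rw [Finset.sum_comm]
    exact Finset.sum_congr rfl fun j _ => Finset.sum_congr rfl fun i _ => by ring
  · rw [SV_sum3]
    exact Finset.sum_congr rfl fun j _ => Finset.sum_congr rfl fun b _ =>
      Finset.sum_congr rfl fun a _ => by ring

lemma SV_cs_aux {ι : Type*} [Fintype ι] (s : ι → ℝ) (c : ι → ℂ) (hs : ∀ i, 0 ≤ s i)
    (h0 : ∀ i, s i = 0 → c i = 0) :
    (∑ i, s i)⁻¹ * Complex.normSq (∑ i, c i) ≤ ∑ i, (s i)⁻¹ * Complex.normSq (c i) := by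
  have hrhs : 0 ≤ ∑ i, (s i)⁻¹ * Complex.normSq (c i) :=
    Finset.sum_nonneg fun i _ => mul_nonneg (inv_nonneg.mpr (hs i)) (Complex.normSq_nonneg _)
  rcases eq_or_lt_of_le (Finset.sum_nonneg (fun i _ => hs i) : (0:ℝ) ≤ ∑ i, s i) with h | h
  · rw [← h]; simpa using hrhs
  · rw [inv_mul_le_iff₀ h]
    have h1 : ‖∑ i, c i‖ ≤ ∑ i, ‖c i‖ := norm_sum_le _ _
    have h2 : (∑ i, ‖c i‖) ^ 2 ≤ (∑ i, Real.sqrt (s i) ^ 2) *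
        ∑ i, (‖c i‖ / Real.sqrt (s i)) ^ 2 := by
      have := Finset.sum_mul_sq_le_sq_mul_sq Finset.univ (fun i => Real.sqrt (s i))
        (fun i => ‖c i‖ / Real.sqrt (s i))
      refine le_trans (le_of_eq ?_) this
      refine congrArg (· ^ 2) (Finset.sum_congr rfl fun i _ => ?_).symm
      rcases eq_or_lt_of_le (hs i) with h | h
      · rw [← h]; simp [h0 i h.symm]
      · have : Real.sqrt (s i) ≠ 0 := by positivity
        field_simp
    calc Complex.normSq (∑ i, c i) = ‖∑ i, c i‖ ^ 2 := (Complex.sq_norm _).symm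
      _ ≤ (∑ i, ‖c i‖) ^ 2 :=
          pow_le_pow_left₀ (norm_nonneg _) h1 2
      _ ≤ (∑ i, Real.sqrt (s i) ^ 2) * ∑ i, (‖c i‖ / Real.sqrt (s i)) ^ 2 := h2
      _ = (∑ i, s i) * ∑ i, (s i)⁻¹ * Complex.normSq (c i) := by
          congr 1
          · exact Finset.sum_congr rfl fun i _ => Real.sq_sqrt (hs i)
          · refine Finset.sum_congr rfl fun i _ => ?_
            rw [div_pow, Real.sq_sqrt (hs i), Complex.sq_norm, div_eq_inv_mul]

lemma SV_colQ_superadd {k : ℕ} (A : Fin k → Matrix α β ℝ)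
    (hA : ∀ i, ∀ a b, 0 ≤ A i a b) (x : α → ℂ) (j : β) :
    ∑ i, colQ (A i) x j ≤ colQ (∑ i, A i) x j := by
  unfold colQ
  rw [Finset.sum_sub_distrib]
  have hlin : ∑ i, ∑ a, A i a j * Complex.normSq (x a)
      = ∑ a, (∑ i, A i) a j * Complex.normSq (x a) := by
    rw [Finset.sum_comm]
    simp [Matrix.sum_apply, Finset.sum_mul]
  rw [hlin]
  have hsub : ((∑ a, (∑ i, A i) a j)⁻¹ * Complex.normSq (∑ a, ((((∑ i, A i) a j : ℝ)) : ℂ) * x a))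
      ≤ ∑ i, (∑ a, A i a j)⁻¹ * Complex.normSq (∑ a, ((A i a j : ℝ) : ℂ) * x a) := by
    have hc : (∑ a, ((((∑ i, A i) a j : ℝ)) : ℂ) * x a) = ∑ i, ∑ a, ((A i a j : ℝ) : ℂ) * x a := by
      rw [Finset.sum_comm]
      simp [Matrix.sum_apply, Finset.sum_mul]
    have hsum : (∑ a, (∑ i, A i) a j) = ∑ i, ∑ a, A i a j := by
      rw [Finset.sum_comm]; simp [Matrix.sum_apply]
    rw [hc, hsum]
    exact SV_cs_aux _ _ (fun i => Finset.sum_nonneg fun a _ => hA i a j)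
      (fun i hi => by
        have : ∀ a ∈ Finset.univ, A i a j = 0 :=
          (Finset.sum_eq_zero_iff_of_nonneg (fun a _ => hA i a j)).mp hi
        exact Finset.sum_eq_zero fun a ha => by rw [this a ha]; simp)
  linarith

lemma SV_sumColQ_superadd {k : ℕ} (A : Fin k → Matrix α β ℝ)
    (hA : ∀ i, ∀ a b, 0 ≤ A i a b) (x : α → ℂ) :
    ∑ i, ∑ j, colQ (A i) x j ≤ ∑ j, colQ (∑ i, A i) x j := by
  rw [Finset.sum_comm]
  exact Finset.sum_le_sum fun j _ => SV_colQ_superadd A hA x j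

lemma SV_real_quad (M : Matrix α α ℝ) (x : α → ℝ) :
    star (fun i => (x i : ℂ)) ⬝ᵥ (M.map (fun a => (a : ℂ))).mulVec (fun i => (x i : ℂ))
      = ((star x ⬝ᵥ M.mulVec x : ℝ) : ℂ) := by
  simp only [dotProduct, Matrix.mulVec, Matrix.map_apply, Pi.star_apply]
  push_cast
  simp [Complex.conj_ofReal]

lemma SV_quad_real_eq (B : Matrix α β ℝ) (x : α → ℝ) :
    star x ⬝ᵥ (errE B).mulVec x = ∑ j, colQ B (fun i => (x i : ℂ)) j := by
  have h := SV_quadE B (fun i => (x i : ℂ))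
  rw [SV_real_quad] at h
  exact_mod_cast h

lemma SV_reE (B : Matrix α β ℝ) (x : α → ℂ) :
    (star x ⬝ᵥ ((errE B).map (fun a => (a : ℂ))).mulVec x).re = ∑ j, colQ B x j := by
  rw [SV_quadE]; exact Complex.ofReal_re _

lemma SV_errE_PSD_sum {k : ℕ} (A : Fin k → Matrix α β ℝ)
    (hA : ∀ i, ∀ a b, 0 ≤ A i a b) (hP : ∀ i, (errE (A i)).PosSemidef) :
    (errE (∑ i, A i)).PosSemidef := by
  refine Matrix.PosSemidef.of_dotProduct_mulVec_nonneg (SV_errE_herm _) fun x => ?_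
  rw [SV_quad_real_eq]
  refine le_trans ?_ (SV_sumColQ_superadd A hA _)
  refine Finset.sum_nonneg fun i _ => ?_
  rw [← SV_quad_real_eq]
  exact (hP i).dotProduct_mulVec_nonneg x

lemma SV_map_sum {k : ℕ} (M : Fin k → Matrix α β ℝ) :
    (∑ i, M i).map (fun a => (a : ℂ)) = ∑ i, (M i).map (fun a => (a : ℂ)) := by
  ext a b
  simp [Matrix.map_apply, Matrix.sum_apply, Complex.ofReal_sum]

lemma SV_bilin_sum {k : ℕ} (N : Fin k → Matrix α β ℂ) (x : α → ℂ) (y : β → ℂ) :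
    star x ⬝ᵥ (∑ i, N i).mulVec y = ∑ i, star x ⬝ᵥ (N i).mulVec y := by
  simp only [dotProduct, Matrix.mulVec, Matrix.sum_apply, Finset.sum_mul,
    Finset.mul_sum]
  exact (Finset.sum_congr rfl fun a _ => Finset.sum_comm).trans Finset.sum_comm

end Aux

/-- SV approximation of nonnegative matrices is additive: if `Ãᵢ ⊵_ε Aᵢ`
for each `i`, then `∑ᵢ Ãᵢ ⊵_ε ∑ᵢ Aᵢ`. -/
theorem stmt_16 {m n : ℕ} (k : ℕ) (hk : 1 ≤ k)
    (A Atil : Fin k → Matrix (Fin m) (Fin n) ℝ)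
    (hA : ∀ i, ∀ a b, 0 ≤ A i a b) (hAtil : ∀ i, ∀ a b, 0 ≤ Atil i a b)
    (ε : ℝ) (hε : 0 ≤ ε)
    (h : ∀ i, IsSVgApprox ε (A i) (Atil i)) :
    IsSVgApprox ε (∑ i, A i) (∑ i, Atil i) := by
  have hAT : ∀ i, ∀ a b, 0 ≤ (fun i => (A i)ᵀ) i a b := fun i a b => hA i b a
  have hFsum : errF (∑ i, A i) = errE (∑ i, (A i)ᵀ) := by
    rw [SV_errF_eq, Matrix.transpose_sum]
  refine ⟨SV_errE_PSD_sum A hA (fun i => (h i).1), ?_, ?_⟩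
  · rw [hFsum]
    exact SV_errE_PSD_sum _ hAT (fun i => by
      have := (h i).2.1
      rwa [SV_errF_eq] at this)
  · intro x y
    have hE : ∑ i, (star x ⬝ᵥ ((errE (A i)).map (fun a => (a : ℂ))).mulVec x).re ≤
        (star x ⬝ᵥ ((errE (∑ i, A i)).map (fun a => (a : ℂ))).mulVec x).re := by
      simp only [SV_reE]
      exact SV_sumColQ_superadd A hA x
    have hF : ∑ i, (star y ⬝ᵥ ((errF (A i)).map (fun a => (a : ℂ))).mulVec y).re ≤
        (star y ⬝ᵥ ((errF (∑ i, A i)).map (fun a => (a : ℂ))).mulVec y).re := by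
      rw [hFsum]
      simp only [SV_errF_eq, SV_reE]
      exact SV_sumColQ_superadd _ hAT y
    have hsplit : star x ⬝ᵥ (((∑ i, Atil i) - ∑ i, A i).map (fun a => (a : ℂ))).mulVec y
        = ∑ i, star x ⬝ᵥ ((Atil i - A i).map (fun a => (a : ℂ))).mulVec y := by
      rw [← Finset.sum_sub_distrib, SV_map_sum, SV_bilin_sum]
    rw [hsplit]
    calc ‖∑ i, star x ⬝ᵥ ((Atil i - A i).map (fun a => (a : ℂ))).mulVec y‖
        ≤ ∑ i, ‖star x ⬝ᵥ ((Atil i - A i).map (fun a => (a : ℂ))).mulVec y‖ :=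
          norm_sum_le _ _
      _ ≤ ∑ i, ε / 4 * ((star x ⬝ᵥ ((errE (A i)).map (fun a => (a : ℂ))).mulVec x).re +
            (star y ⬝ᵥ ((errF (A i)).map (fun a => (a : ℂ))).mulVec y).re) :=
          Finset.sum_le_sum fun i _ => (h i).2.2 x y
      _ = ε / 4 * ((∑ i, (star x ⬝ᵥ ((errE (A i)).map (fun a => (a : ℂ))).mulVec x).re) +
            ∑ i, (star y ⬝ᵥ ((errF (A i)).map (fun a => (a : ℂ))).mulVec y).re) := by
          rw [← Finset.sum_add_distrib, Finset.mul_sum]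
      _ ≤ _ := by
          refine mul_le_mul_of_nonneg_left ?_ (by linarith)
          exact add_le_add hE hF
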